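/- For every integer r ≥ 0 and all positive integers a and b, the following identity holds: Σ_{i=0}^{r} binom(2r, i) · binom(2r − i, r) · (r+1)^i · a^{2r−i} · b^i = (r+1) · C_r · a^r · (a + (r+1)b)^r, where C_r = binom(2r,r)/(r+1) is the Catalan number. -/

import Mathlib

theorem stmt14 (r a b : ℕ) (ha : 0 < a) (hb : 0 < b) :
    ∑ i ∈ Finset.range (r + 1),
      Nat.choose (2 * r) i * Nat.choose (2 * r - i) r * (r + 1) ^ i *
        a ^ (2 * r - i) * b ^ i =
    (r + 1) * catalan r * a ^ r * (a + (r + 1) * b) ^ r := by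
  rw [succ_mul_catalan_eq_centralBinom, Nat.centralBinom, add_comm a ((r+1)*b), add_pow,
    Finset.mul_sum]
  apply Finset.sum_congr rfl
  intro i hi
  have hir : i ≤ r := Nat.lt_succ_iff.mp (Finset.mem_range.mp hi)
  have h1 : Nat.choose (2 * r) r * Nat.choose r i
      = Nat.choose (2 * r) i * Nat.choose (2 * r - i) r := by
    rw [Nat.choose_mul hir]
    congr 1
    rw [← Nat.choose_symm (by omega)]
    congr 1
    omega
  have h2 : a ^ (2 * r - i) = a ^ r * a ^ (r - i) := by
    rw [← pow_add]; congr 1; omega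
  rw [h2, mul_pow, Nat.cast_id, ← h1]
  ring
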